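/- Let H be a complex Hilbert space, α ∈ (1, 2), γ ∈ (0, 1) and M > 0. There exists θ₀ ∈ (π/2, π) such that for every θ ∈ (π/2, θ₀) there is a constant c > 0, depending only on α, γ, θ, M, with the property: for every time step τ > 0, every z ∈ D(τ,θ), writing w = δ_τ(e^{−zτ}) with δ_τ the BDF2 generating symbol, and for all bounded linear operators R₁, R₂ on H satisfying ‖R₁‖ ≤ M|z|^{−α}, ‖R₂‖ ≤ M|z|^{−α} and the resolvent identity R₂ − R₁ = (z^α − w^α) R₂ ∘ R₁, one has ‖R₂ · w^{2−γ} ρ₁(e^{−zτ}) τ² − R₁ · z^{−γ}‖ ≤ c τ² |z|^{2−α−γ}. -/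

import Mathlib

open Complex Set

/-- The BDF2 generating symbol `δ_τ(ξ) = τ⁻¹(3/2 − 2ξ + ξ²/2)`. -/
noncomputable def bdf2 (τ : ℝ) (ξ : ℂ) : ℂ :=
  (τ : ℂ)⁻¹ * (3 / 2 - 2 * ξ + ξ ^ 2 / 2)

/-- The region `D(τ,θ)`: nonzero `z` with either `|arg z| = θ` and `|Im z| ≤ π/τ`,
or `|z| ≤ 1/τ` and `|arg z| ≤ θ`. -/
def Dset (τ θ : ℝ) : Set ℂ :=
  {z : ℂ | z ≠ 0 ∧
    ((|z.arg| = θ ∧ |z.im| ≤ Real.pi / τ) ∨ (‖z‖ ≤ 1 / τ ∧ |z.arg| ≤ θ))}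

/-- Closed form of the generating function `Σ_{n≥1} n ξⁿ`. -/
noncomputable def rho1 (ξ : ℂ) : ℂ := ξ / (1 - ξ) ^ 2

noncomputable def del (ζ : ℂ) : ℂ :=
  3 / 2 - 2 * Complex.exp (-ζ) + (Complex.exp (-ζ)) ^ 2 / 2

section near
variable {ζ : ℂ}

lemma mul_cpow_of_arg {x y : ℂ} (hx : x ≠ 0) (hy : y ≠ 0)
    (h : Complex.arg x + Complex.arg y ∈ Set.Ioc (-Real.pi) Real.pi) (s : ℂ) :
    (x * y) ^ s = x ^ s * y ^ s := by
  rw [Complex.cpow_def_of_ne_zero (mul_ne_zero hx hy), Complex.cpow_def_of_ne_zero hx,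
    Complex.cpow_def_of_ne_zero hy, Complex.log_mul hx hy h, add_mul, Complex.exp_add]

lemma real_mul_cpow {r : ℝ} (hr : 0 < r) {w : ℂ} (hw : w ≠ 0) (s : ℂ) :
    ((r : ℂ) * w) ^ s = (r : ℂ) ^ s * w ^ s := by
  have hr' : (r : ℂ) ≠ 0 := by exact_mod_cast hr.ne'
  rw [Complex.cpow_def_of_ne_zero (mul_ne_zero hr' hw), Complex.cpow_def_of_ne_zero hr',
    Complex.cpow_def_of_ne_zero hw, Complex.log_ofReal_mul hr hw, add_mul, Complex.exp_add,
    Complex.ofReal_log hr.le]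

lemma exp_taylor2 {ζ : ℂ} (h : ‖ζ‖ ≤ 1) :
    ‖Complex.exp (-ζ) - (1 - ζ)‖ ≤ ‖ζ‖ ^ 2 := by
  have h' : ‖-ζ‖ ≤ 1 := by rwa [norm_neg]
  have H := Complex.exp_bound h' (n := 2) (by norm_num)
  simp only [Finset.sum_range_succ, Finset.sum_range_zero] at H
  norm_num at H
  have e : Complex.exp (-ζ) - (1 - ζ) = Complex.exp (-ζ) - (1 + -ζ) := by ring
  rw [e]
  nlinarith [sq_nonneg (‖ζ‖), norm_nonneg (Complex.exp (-ζ) - (1 + -ζ))]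

lemma exp_taylor3 {ζ : ℂ} (h : ‖ζ‖ ≤ 1) :
    ‖Complex.exp (-ζ) - (1 - ζ + ζ ^ 2 / 2)‖ ≤ ‖ζ‖ ^ 3 := by
  have h' : ‖-ζ‖ ≤ 1 := by rwa [norm_neg]
  have H := Complex.exp_bound h' (n := 3) (by norm_num)
  simp only [Finset.sum_range_succ, Finset.sum_range_zero] at H
  norm_num [Nat.factorial] at H
  have e : Complex.exp (-ζ) - (1 - ζ + ζ ^ 2 / 2)
      = Complex.exp (-ζ) - (1 + -ζ + ζ ^ 2 / 2) := by ring
  rw [e]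
  nlinarith [pow_nonneg (norm_nonneg ζ) 3,
    norm_nonneg (Complex.exp (-ζ) - (1 + -ζ + ζ ^ 2 / 2))]

lemma exp_taylor3' {ζ : ℂ} (h : ‖ζ‖ ≤ 1 / 2) :
    ‖Complex.exp (-(2 * ζ)) - (1 - 2 * ζ + 2 * ζ ^ 2)‖ ≤ 8 * ‖ζ‖ ^ 3 := by
  have h2 : ‖2 * ζ‖ ≤ 1 := by
    rw [norm_mul]; simp only [Complex.norm_two]; linarith
  have := exp_taylor3 (ζ := 2 * ζ) h2
  have e : 1 - 2 * ζ + (2 * ζ) ^ 2 / 2 = 1 - 2 * ζ + 2 * ζ ^ 2 := by ring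
  rw [e] at this
  calc ‖Complex.exp (-(2 * ζ)) - (1 - 2 * ζ + 2 * ζ ^ 2)‖
      ≤ ‖2 * ζ‖ ^ 3 := this
    _ = 8 * ‖ζ‖ ^ 3 := by rw [norm_mul]; simp [Complex.norm_two]; ring


lemma exp_sq (ζ : ℂ) : (Complex.exp (-ζ)) ^ 2 = Complex.exp (-(2 * ζ)) := by
  rw [sq, ← Complex.exp_add]; ring_nf

lemma del_sub (h : ‖ζ‖ ≤ 1 / 2) :
    ‖del ζ - ζ‖ ≤ 6 * ‖ζ‖ ^ 3 := by
  set E1 := Complex.exp (-ζ) - (1 - ζ + ζ ^ 2 / 2) with hE1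
  set E2 := Complex.exp (-(2 * ζ)) - (1 - 2 * ζ + 2 * ζ ^ 2) with hE2
  have idn : del ζ - ζ = -2 * E1 + E2 / 2 := by
    rw [del, exp_sq, hE1, hE2]; ring
  have b1 : ‖E1‖ ≤ ‖ζ‖ ^ 3 := exp_taylor3 (by linarith)
  have b2 : ‖E2‖ ≤ 8 * ‖ζ‖ ^ 3 := exp_taylor3' h
  calc ‖del ζ - ζ‖ ≤ ‖-2 * E1‖ + ‖E2 / 2‖ := by
        rw [idn]; exact norm_add_le _ _
    _ = 2 * ‖E1‖ + ‖E2‖ / 2 := by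
        rw [norm_mul, norm_div]; norm_num
    _ ≤ 6 * ‖ζ‖ ^ 3 := by linarith

lemma abs_del_ge (hζ : ζ ≠ 0) (h : ‖ζ‖ ≤ 1 / 5) :
    ‖ζ‖ / 2 ≤ ‖del ζ‖ := by
  have h3 : ‖del ζ - ζ‖ ≤ 6 * ‖ζ‖ ^ 3 := del_sub (by linarith)
  have habs : 0 < ‖ζ‖ := norm_pos_iff.mpr hζ
  have ha2 : ‖ζ‖ ^ 2 ≤ 1 / 25 := by nlinarith
  have hb : 6 * ‖ζ‖ ^ 3 ≤ (1 / 2) * ‖ζ‖ := by nlinarith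
  have h5 : ‖ζ‖ - ‖del ζ‖ ≤ ‖del ζ - ζ‖ := by
    have := norm_sub_norm_le ζ (del ζ)
    calc ‖ζ‖ - ‖del ζ‖ ≤ ‖ζ - del ζ‖ := this
      _ = ‖del ζ - ζ‖ := by rw [← norm_neg]; ring_nf
  linarith

lemma del_ne_zero (hζ : ζ ≠ 0) (h : ‖ζ‖ ≤ 1 / 5) : del ζ ≠ 0 := by
  have := abs_del_ge hζ h
  have habs : 0 < ‖ζ‖ := norm_pos_iff.mpr hζ
  intro h0
  rw [h0, norm_zero] at this
  linarith

lemma abs_h_sub_one (hζ : ζ ≠ 0) (h : ‖ζ‖ ≤ 1 / 5) :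
    ‖del ζ / ζ - 1‖ ≤ 6 * ‖ζ‖ ^ 2 := by
  have habs : 0 < ‖ζ‖ := norm_pos_iff.mpr hζ
  have e : del ζ / ζ - 1 = (del ζ - ζ) / ζ := by field_simp
  rw [e, norm_div]
  rw [div_le_iff₀ habs]
  calc ‖del ζ - ζ‖ ≤ 6 * ‖ζ‖ ^ 3 := del_sub (by linarith)
    _ = 6 * ‖ζ‖ ^ 2 * ‖ζ‖ := by ring

lemma abs_log_h (hζ : ζ ≠ 0) (h : ‖ζ‖ ≤ 1 / 5) :
    ‖Complex.log (del ζ / ζ)‖ ≤ 9 * ‖ζ‖ ^ 2 := by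
  have hd := abs_h_sub_one hζ h
  have habs : 0 < ‖ζ‖ := norm_pos_iff.mpr hζ
  have hhalf : ‖del ζ / ζ - 1‖ ≤ 1 / 2 := by
    nlinarith
  have := Complex.norm_log_one_add_half_le_self hhalf
  rw [show (1 : ℂ) + (del ζ / ζ - 1) = del ζ / ζ by ring] at this
  nlinarith

lemma abs_h_cpow_sub_one (s : ℝ) (hs : |s| ≤ 2) (hζ : ζ ≠ 0) (h : ‖ζ‖ ≤ 1 / 5) :
    ‖(del ζ / ζ) ^ (s : ℂ) - 1‖ ≤ 36 * ‖ζ‖ ^ 2 := by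
  have habs : 0 < ‖ζ‖ := norm_pos_iff.mpr hζ
  have hh0 : del ζ / ζ ≠ 0 := div_ne_zero (del_ne_zero hζ h) hζ
  rw [Complex.cpow_def_of_ne_zero hh0]
  have hlog := abs_log_h hζ h
  have habss : ‖Complex.log (del ζ / ζ) * (s : ℂ)‖ ≤ 18 * ‖ζ‖ ^ 2 := by
    rw [norm_mul, Complex.norm_real, Real.norm_eq_abs]
    nlinarith [norm_nonneg (Complex.log (del ζ / ζ))]
  have h1 : ‖Complex.log (del ζ / ζ) * (s : ℂ)‖ ≤ 1 := by nlinarith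
  have := Complex.norm_exp_sub_one_le h1
  nlinarith


lemma abs_arg_h (hζ : ζ ≠ 0) (h : ‖ζ‖ ≤ 1 / 5) :
    |Complex.arg (del ζ / ζ)| ≤ 1 := by
  set w := del ζ / ζ with hw
  have hd : ‖w - 1‖ ≤ 6 * ‖ζ‖ ^ 2 := abs_h_sub_one hζ h
  have habs : 0 < ‖ζ‖ := norm_pos_iff.mpr hζ
  have hd' : ‖w - 1‖ ≤ 6 / 25 := by nlinarith
  have hre : (19 : ℝ) / 25 ≤ w.re := by
    have : |w.re - 1| ≤ 6 / 25 := by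
      calc |w.re - 1| = |(w - 1).re| := by simp
        _ ≤ ‖w - 1‖ := Complex.abs_re_le_norm _
        _ ≤ 6 / 25 := hd'
    have := abs_le.mp this
    linarith [this.1]
  have hw0 : w ≠ 0 := by
    intro h0; rw [h0] at hre; norm_num at hre
  have habsw : (19 : ℝ) / 25 ≤ ‖w‖ := le_trans hre (Complex.re_le_norm w)
  have him : |w.im| ≤ 6 / 25 := by
    calc |w.im| = |(w - 1).im| := by simp
      _ ≤ ‖w - 1‖ := Complex.abs_im_le_norm _
      _ ≤ 6 / 25 := hd'
  -- |sin (arg w)| ≤ 6/19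
  have hsin : |Real.sin (Complex.arg w)| ≤ 6 / 19 := by
    rw [Complex.sin_arg, abs_div]
    rw [_root_.abs_of_nonneg (norm_nonneg w)]
    rw [div_le_iff₀ (by linarith : (0:ℝ) < ‖w‖)]
    calc |w.im| ≤ 6 / 25 := him
      _ ≤ 6 / 19 * (19 / 25) := by norm_num
      _ ≤ 6 / 19 * ‖w‖ := by nlinarith
  have hargle : |Complex.arg w| ≤ Real.pi / 2 :=
    Complex.abs_arg_le_pi_div_two_iff.mpr (by linarith)
  -- sin |arg w| = |sin (arg w)|
  have hsinabs : Real.sin |Complex.arg w| = |Real.sin (Complex.arg w)| := by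
    rcases abs_cases (Complex.arg w) with ⟨e1, e2⟩ | ⟨e1, e2⟩
    · rw [e1, _root_.abs_of_nonneg]
      exact Real.sin_nonneg_of_nonneg_of_le_pi e2
        (le_trans (le_of_abs_le hargle) (by linarith [Real.pi_pos]))
    · rw [e1, Real.sin_neg, _root_.abs_of_nonpos]
      apply Real.sin_nonpos_of_nonpos_of_neg_pi_le (le_of_lt e2)
      have := neg_abs_le (Complex.arg w)
      have hpi2 : -(Real.pi / 2) ≤ Complex.arg w := by
        have := abs_le.mp hargle; linarith [this.1]
      linarith [Real.pi_pos]
  have hjordan := Real.mul_le_sin (abs_nonneg (Complex.arg w)) hargle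
  rw [hsinabs] at hjordan
  have hpi : Real.pi ≤ 3.15 := by linarith [Real.pi_lt_d2]
  have hpipos := Real.pi_pos
  -- (2/π)|arg| ≤ 6/19 ⟹ |arg| ≤ (π/2)(6/19) ≤ 1
  have : 2 / Real.pi * |Complex.arg w| ≤ 6 / 19 := le_trans hjordan hsin
  rw [div_mul_eq_mul_div, div_le_iff₀ hpipos] at this
  nlinarith


/-- the splitting `(del ζ)^s = ζ^s ((del ζ)/ζ)^s` near the origin. -/
lemma del_cpow_split (s : ℂ) (hζ : ζ ≠ 0) (h : ‖ζ‖ ≤ 1 / 5)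
    (harg : |ζ.arg| ≤ Real.pi / 2 + 1 / 10) :
    (del ζ) ^ s = ζ ^ s * (del ζ / ζ) ^ s := by
  have hh0 : del ζ / ζ ≠ 0 := div_ne_zero (del_ne_zero hζ h) hζ
  have e : del ζ = ζ * (del ζ / ζ) := by field_simp
  rw [show (del ζ) ^ s = (ζ * (del ζ / ζ)) ^ s by rw [← e]]
  apply mul_cpow_of_arg hζ hh0 _ s
  have h1 := abs_arg_h hζ h
  have h2 := abs_le.mp harg
  have h3 := abs_le.mp h1
  have hpi : 3.14 ≤ Real.pi := by linarith [Real.pi_gt_d2]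
  constructor
  · linarith [h2.1, h3.1]
  · linarith [h2.2, h3.2]

/-- lower bound for `1 - exp (-ζ)`. -/
lemma abs_one_sub_exp_ge (hζ : ζ ≠ 0) (h : ‖ζ‖ ≤ 1 / 2) :
    ‖ζ‖ / 2 ≤ ‖1 - Complex.exp (-ζ)‖ := by
  have habs : 0 < ‖ζ‖ := norm_pos_iff.mpr hζ
  have h2 : ‖Complex.exp (-ζ) - (1 - ζ)‖ ≤ ‖ζ‖ ^ 2 :=
    exp_taylor2 (by linarith)
  have key : (1:ℂ) - Complex.exp (-ζ) = ζ - (Complex.exp (-ζ) - (1 - ζ)) := by ring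
  have h6 := norm_sub_norm_le ζ (Complex.exp (-ζ) - (1 - ζ))
  rw [key]
  nlinarith

lemma one_sub_exp_ne (hζ : ζ ≠ 0) (h : ‖ζ‖ ≤ 1 / 2) :
    (1 : ℂ) - Complex.exp (-ζ) ≠ 0 := by
  have := abs_one_sub_exp_ge hζ h
  have habs : 0 < ‖ζ‖ := norm_pos_iff.mpr hζ
  intro h0; rw [h0, norm_zero] at this; linarith

/-- quadratic bound for `k - 1` where `k = ζ² e^{-ζ}/(1-e^{-ζ})²`. -/
lemma abs_k_sub_one (hζ : ζ ≠ 0) (h : ‖ζ‖ ≤ 1 / 5) :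
    ‖ζ ^ 2 * Complex.exp (-ζ) / (1 - Complex.exp (-ζ)) ^ 2 - 1‖
      ≤ 12 * ‖ζ‖ ^ 2 := by
  have habs : 0 < ‖ζ‖ := norm_pos_iff.mpr hζ
  have hne := one_sub_exp_ne hζ (by linarith)
  set E := Complex.exp (-ζ) - (1 - ζ + ζ ^ 2 / 2) with hE
  have hEb : ‖E‖ ≤ ‖ζ‖ ^ 3 := exp_taylor3 (by linarith)
  have idn : ζ ^ 2 * Complex.exp (-ζ) - (1 - Complex.exp (-ζ)) ^ 2
      = ζ ^ 4 / 4 + 2 * ζ * E - E ^ 2 := by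
    rw [hE]; ring
  have hnum : ‖ζ ^ 2 * Complex.exp (-ζ) - (1 - Complex.exp (-ζ)) ^ 2‖
      ≤ 3 * ‖ζ‖ ^ 4 := by
    rw [idn]
    have h1 : ‖ζ ^ 4 / 4 + 2 * ζ * E - E ^ 2‖ ≤
        ‖ζ ^ 4 / 4‖ + ‖2 * ζ * E‖ + ‖E ^ 2‖ := by
      calc ‖ζ ^ 4 / 4 + 2 * ζ * E - E ^ 2‖
          ≤ ‖ζ ^ 4 / 4 + 2 * ζ * E‖ + ‖E ^ 2‖ := by
            rw [sub_eq_add_neg]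
            calc _ ≤ ‖ζ ^ 4 / 4 + 2 * ζ * E‖ + ‖-(E^2)‖ :=
                  norm_add_le _ _
              _ = _ := by rw [norm_neg]
        _ ≤ _ := by linarith [norm_add_le (ζ ^ 4 / 4) (2 * ζ * E)]
    have e1 : ‖ζ ^ 4 / 4‖ = ‖ζ‖ ^ 4 / 4 := by
      rw [norm_div, norm_pow]; norm_num
    have e2 : ‖2 * ζ * E‖ = 2 * ‖ζ‖ * ‖E‖ := by
      rw [norm_mul, norm_mul, Complex.norm_two]
    have e3 : ‖E ^ 2‖ = ‖E‖ ^ 2 := by rw [norm_pow]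
    rw [e1, e2, e3] at h1
    have hE2 : ‖E‖ ^ 2 ≤ ‖ζ‖ ^ 6 := by nlinarith [norm_nonneg E]
    have ha2 : ‖ζ‖ ^ 2 ≤ 1 / 25 := by nlinarith
    have hz6 : ‖ζ‖ ^ 6 ≤ ‖ζ‖ ^ 4 / 4 := by
      nlinarith [mul_le_mul_of_nonneg_left ha2 (pow_nonneg (norm_nonneg ζ) 4)]
    nlinarith [norm_nonneg E]
  have hden := abs_one_sub_exp_ge hζ (by linarith)
  have e : ζ ^ 2 * Complex.exp (-ζ) / (1 - Complex.exp (-ζ)) ^ 2 - 1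
      = (ζ ^ 2 * Complex.exp (-ζ) - (1 - Complex.exp (-ζ)) ^ 2) /
        (1 - Complex.exp (-ζ)) ^ 2 := by
    field_simp
  rw [e, norm_div, norm_pow]
  have hdp : (0:ℝ) < ‖1 - Complex.exp (-ζ)‖ :=
    lt_of_lt_of_le (by positivity) hden
  rw [div_le_iff₀ (by positivity)]
  calc ‖ζ ^ 2 * Complex.exp (-ζ) - (1 - Complex.exp (-ζ)) ^ 2‖
      ≤ 3 * ‖ζ‖ ^ 4 := hnum
    _ = 12 * ‖ζ‖ ^ 2 * (‖ζ‖ / 2) ^ 2 := by ring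
    _ ≤ 12 * ‖ζ‖ ^ 2 * ‖1 - Complex.exp (-ζ)‖ ^ 2 := by
      gcongr


lemma near_N1 {α' : ℝ} (hs : |α'| ≤ 2) (hζ : ζ ≠ 0) (h : ‖ζ‖ ≤ 1 / 5)
    (harg : |ζ.arg| ≤ Real.pi / 2 + 1 / 10) :
    ‖ζ ^ (α' : ℂ) - (del ζ) ^ (α' : ℂ)‖ ≤ 36 * ‖ζ‖ ^ (α' + 2) := by
  have habs : 0 < ‖ζ‖ := norm_pos_iff.mpr hζ
  rw [del_cpow_split (α' : ℂ) hζ h harg]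
  have e : ζ ^ (α' : ℂ) - ζ ^ (α' : ℂ) * (del ζ / ζ) ^ (α' : ℂ)
      = -(ζ ^ (α' : ℂ) * ((del ζ / ζ) ^ (α' : ℂ) - 1)) := by ring
  rw [e, norm_neg, norm_mul, Complex.norm_cpow_real]
  have hb := abs_h_cpow_sub_one α' hs hζ h
  have e2 : ‖ζ‖ ^ (α' + 2) = ‖ζ‖ ^ α' * ‖ζ‖ ^ 2 := by
    rw [Real.rpow_add habs, Real.rpow_two]
  rw [e2]
  calc ‖ζ‖ ^ α' * ‖(del ζ / ζ) ^ (α' : ℂ) - 1‖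
      ≤ ‖ζ‖ ^ α' * (36 * ‖ζ‖ ^ 2) := by
        gcongr
    _ = 36 * (‖ζ‖ ^ α' * ‖ζ‖ ^ 2) := by ring

lemma near_N2 {γ : ℝ} (hγ : 0 < γ) (hγ2 : γ < 1) (hζ : ζ ≠ 0) (h : ‖ζ‖ ≤ 1 / 5)
    (harg : |ζ.arg| ≤ Real.pi / 2 + 1 / 10) :
    ‖(del ζ) ^ (((2 - γ : ℝ)) : ℂ) * rho1 (Complex.exp (-ζ)) - ζ ^ (-(γ : ℂ))‖
      ≤ 100 * ‖ζ‖ ^ (2 - γ) := by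
  have habs : 0 < ‖ζ‖ := norm_pos_iff.mpr hζ
  have hne := one_sub_exp_ne hζ (by linarith)
  set k := ζ ^ 2 * Complex.exp (-ζ) / (1 - Complex.exp (-ζ)) ^ 2 with hk
  have hsplit := del_cpow_split (((2 - γ : ℝ)) : ℂ) hζ h harg
  have hz22 : ζ ^ (((2 - γ : ℝ)) : ℂ) = ζ ^ (-(γ : ℂ)) * ζ ^ 2 := by
    have e : (((2 - γ : ℝ)) : ℂ) = -(γ : ℂ) + ((2 : ℕ) : ℂ) := by push_cast; ring
    rw [e, Complex.cpow_add _ _ hζ, Complex.cpow_natCast]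
  have hrho : rho1 (Complex.exp (-ζ)) = k / ζ ^ 2 := by
    rw [rho1, hk]; field_simp
  have key : (del ζ) ^ (((2 - γ : ℝ)) : ℂ) * rho1 (Complex.exp (-ζ)) - ζ ^ (-(γ : ℂ))
      = ζ ^ (-(γ : ℂ)) * ((del ζ / ζ) ^ (((2 - γ : ℝ)) : ℂ) * k - 1) := by
    rw [hsplit, hz22, hrho]
    have hz2 : (ζ : ℂ) ^ 2 ≠ 0 := pow_ne_zero 2 hζ
    field_simp
  rw [key, norm_mul]
  set hh := (del ζ / ζ) ^ (((2 - γ : ℝ)) : ℂ) with hhh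
  have habsneg : ‖ζ ^ (-(γ : ℂ))‖ = ‖ζ‖ ^ (-γ) := by
    rw [show -(γ : ℂ) = ((-γ : ℝ) : ℂ) by push_cast; ring, Complex.norm_cpow_real]
  have hkb := abs_k_sub_one hζ h
  have hhb := abs_h_cpow_sub_one (2 - γ) (by rw [_root_.abs_of_nonneg] <;> linarith) hζ h
  rw [← hhh] at hhb
  have hz2b : ‖ζ‖ ^ 2 ≤ 1 / 25 := by nlinarith
  have hkabs : ‖k‖ ≤ 37 / 25 := by
    have := norm_sub_norm_le k (1 : ℂ)
    simp only [norm_one] at this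
    nlinarith [norm_nonneg (k - 1)]
  have hcore : ‖hh * k - 1‖ ≤ 66 * ‖ζ‖ ^ 2 := by
    have e : hh * k - 1 = (hh - 1) * k + (k - 1) := by ring
    rw [e]
    calc ‖(hh - 1) * k + (k - 1)‖
        ≤ ‖(hh - 1) * k‖ + ‖k - 1‖ := norm_add_le _ _
      _ = ‖hh - 1‖ * ‖k‖ + ‖k - 1‖ := by rw [norm_mul]
      _ ≤ 36 * ‖ζ‖ ^ 2 * (37 / 25) + 12 * ‖ζ‖ ^ 2 := by
          have h1 : ‖hh - 1‖ * ‖k‖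
              ≤ (36 * ‖ζ‖ ^ 2) * (37 / 25) := by
            apply mul_le_mul hhb hkabs (norm_nonneg k) (by positivity)
          linarith
      _ ≤ 66 * ‖ζ‖ ^ 2 := by nlinarith
  rw [habsneg]
  have e3 : ‖ζ‖ ^ (2 - γ) = ‖ζ‖ ^ (-γ) * ‖ζ‖ ^ 2 := by
    rw [show (2 - γ : ℝ) = -γ + 2 by ring, Real.rpow_add habs, Real.rpow_two]
  rw [e3]
  calc ‖ζ‖ ^ (-γ) * ‖hh * k - 1‖
      ≤ ‖ζ‖ ^ (-γ) * (66 * ‖ζ‖ ^ 2) := by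
        gcongr
    _ ≤ 100 * (‖ζ‖ ^ (-γ) * ‖ζ‖ ^ 2) := by
        nlinarith [Real.rpow_nonneg (norm_nonneg ζ) (-γ), sq_nonneg (‖ζ‖)]


end near

noncomputable def th0 : ℝ := Real.pi / 2 + 1 / 10
noncomputable def RR : ℝ := Real.pi / Real.sin th0

lemma sin_th0_ge : (199 : ℝ) / 200 ≤ Real.sin th0 := by
  rw [th0, add_comm, Real.sin_add_pi_div_two]
  have := Real.one_sub_sq_div_two_le_cos (x := 1 / 10)
  norm_num at this ⊢
  linarith

lemma sin_th0_pos : (0 : ℝ) < Real.sin th0 := lt_of_lt_of_le (by norm_num) sin_th0_ge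

lemma th0_pos : (0 : ℝ) < th0 := by
  rw [th0]; linarith [Real.pi_pos]

lemma th0_lt_pi : th0 < Real.pi := by
  rw [th0]; linarith [Real.pi_gt_d2]

lemma th0_gt : Real.pi / 2 < th0 := by rw [th0]; linarith

lemma RR_ge_one : (1 : ℝ) ≤ RR := by
  rw [RR]
  rw [le_div_iff₀ sin_th0_pos]
  have := Real.sin_le_one th0
  linarith [Real.pi_gt_d2]

lemma RR_le : RR ≤ 3.2 := by
  rw [RR, div_le_iff₀ sin_th0_pos]
  have h1 := sin_th0_ge
  have h2 := Real.pi_lt_d2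
  nlinarith

lemma cos_th0_eq : Real.cos th0 = -Real.sin (1 / 10) := by
  rw [th0, add_comm, Real.cos_add_pi_div_two]

lemma cos_th0_neg : Real.cos th0 < 0 := by
  rw [cos_th0_eq, neg_lt_zero]
  apply Real.sin_pos_of_pos_of_lt_pi (by norm_num)
  linarith [Real.pi_gt_d2]

lemma cos_th0_ge : -(1 / 10 : ℝ) ≤ Real.cos th0 := by
  rw [cos_th0_eq]
  have : Real.sin (1 / 10) ≤ 1 / 10 := Real.sin_le (by norm_num)
  linarith

/-- the compact region away from the origin. -/
def K : Set ℂ :=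
  {ζ : ℂ | 1 / 5 ≤ ‖ζ‖ ∧ ‖ζ‖ ≤ RR ∧
    ‖ζ‖ * Real.cos th0 ≤ ζ.re}

lemma K_compact : IsCompact K := by
  apply Metric.isCompact_of_isClosed_isBounded
  · have h1 : IsClosed {ζ : ℂ | 1 / 5 ≤ ‖ζ‖} :=
      isClosed_le continuous_const continuous_norm
    have h2 : IsClosed {ζ : ℂ | ‖ζ‖ ≤ RR} :=
      isClosed_le continuous_norm continuous_const
    have h3 : IsClosed {ζ : ℂ | ‖ζ‖ * Real.cos th0 ≤ ζ.re} :=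
      isClosed_le (continuous_norm.mul continuous_const) Complex.continuous_re
    have : K = {ζ : ℂ | 1 / 5 ≤ ‖ζ‖} ∩
        ({ζ : ℂ | ‖ζ‖ ≤ RR} ∩ {ζ : ℂ | ‖ζ‖ * Real.cos th0 ≤ ζ.re}) := by
      ext ζ; simp [K, mem_setOf_eq, mem_inter_iff, and_assoc]
    rw [this]
    exact h1.inter (h2.inter h3)
  · apply (Metric.isBounded_closedBall (x := (0:ℂ)) (r := RR)).subset
    intro ζ hζ
    rw [Metric.mem_closedBall, Complex.dist_eq, sub_zero]
    exact hζ.2.1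

lemma K_ne_zero {ζ : ℂ} (hζ : ζ ∈ K) : ζ ≠ 0 := by
  intro h0
  have := hζ.1
  rw [h0, norm_zero] at this
  norm_num at this

lemma K_re_pos_of_im_zero {ζ : ℂ} (hζ : ζ ∈ K) (him : ζ.im = 0) : 0 < ζ.re := by
  obtain ⟨h1, h2, h3⟩ := hζ
  have habs : ‖ζ‖ = |ζ.re| := by
    rw [Complex.norm_eq_sqrt_sq_add_sq, him]
    simp [Real.sqrt_sq_eq_abs]
  rcases lt_trichotomy ζ.re 0 with h | h | h
  · exfalso
    rw [habs, abs_of_neg h] at h3 h1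
    nlinarith [cos_th0_ge, cos_th0_neg]
  · exfalso; rw [habs, h] at h1; norm_num at h1
  · exact h

lemma K_slit {ζ : ℂ} (hζ : ζ ∈ K) : ζ ∈ Complex.slitPlane := by
  rw [Complex.mem_slitPlane_iff]
  rcases eq_or_ne ζ.im 0 with h | h
  · exact Or.inl (K_re_pos_of_im_zero hζ h)
  · exact Or.inr h

lemma K_exp_re_lt_two {ζ : ℂ} (hζ : ζ ∈ K) : Real.exp (-ζ.re) < 2 := by
  obtain ⟨h1, h2, h3⟩ := hζ
  have hre : RR * Real.cos th0 ≤ ζ.re := by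
    calc RR * Real.cos th0 ≤ ‖ζ‖ * Real.cos th0 := by
          nlinarith [cos_th0_neg]
      _ ≤ ζ.re := h3
  have : -ζ.re ≤ RR * (-Real.cos th0) := by nlinarith
  have hlog : RR * (-Real.cos th0) < Real.log 2 := by
    have hc := cos_th0_ge
    have := RR_le
    have := RR_ge_one
    have hl2 : (0.6931471803 : ℝ) < Real.log 2 := Real.log_two_gt_d9
    nlinarith [cos_th0_neg]
  calc Real.exp (-ζ.re) ≤ Real.exp (RR * (-Real.cos th0)) := Real.exp_le_exp.mpr this
    _ < Real.exp (Real.log 2) := Real.exp_lt_exp.mpr hlog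
    _ = 2 := Real.exp_log (by norm_num)

lemma del_im_eq (ζ : ℂ) :
    (del ζ).im = (Complex.exp (-ζ)).im * ((Complex.exp (-ζ)).re - 2) := by
  set u := Complex.exp (-ζ)
  simp [del, pow_two, Complex.sub_im, Complex.add_im, Complex.mul_im, Complex.div_im,
    Complex.mul_re, Complex.div_re]
  ring

lemma del_re_eq (ζ : ℂ) :
    (del ζ).re = 3 / 2 - 2 * (Complex.exp (-ζ)).re +
      ((Complex.exp (-ζ)).re ^ 2 - (Complex.exp (-ζ)).im ^ 2) / 2 := by
  set u := Complex.exp (-ζ)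
  simp [del, pow_two, Complex.sub_re, Complex.add_re, Complex.mul_re, Complex.div_re,
    Complex.mul_im, Complex.div_im, Complex.normSq_apply]
  rfl

lemma K_del_slit {ζ : ℂ} (hζ : ζ ∈ K) : del ζ ∈ Complex.slitPlane := by
  rw [Complex.mem_slitPlane_iff]
  set u := Complex.exp (-ζ) with hu
  have hure : u.re < 2 := by
    calc u.re ≤ ‖u‖ := Complex.re_le_norm u
      _ = Real.exp (-ζ.re) := by rw [hu, Complex.norm_exp, Complex.neg_re]
      _ < 2 := K_exp_re_lt_two hζ
  rcases eq_or_ne u.im 0 with him | him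
  · -- u is real; show 0 < re (del ζ)
    left
    have hsin : Real.sin ζ.im = 0 := by
      have : u.im = Real.exp (-ζ.re) * Real.sin (-ζ.im) := by
        rw [hu, Complex.exp_im, Complex.neg_re, Complex.neg_im]
      rw [him] at this
      have hexp : (0:ℝ) < Real.exp (-ζ.re) := Real.exp_pos _
      rw [Real.sin_neg] at this
      nlinarith
    obtain ⟨n, hn⟩ := Real.sin_eq_zero_iff.mp hsin
    have hyb : |ζ.im| ≤ 3.2 := by
      calc |ζ.im| ≤ ‖ζ‖ := Complex.abs_im_le_norm ζ
        _ ≤ RR := hζ.2.1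
        _ ≤ 3.2 := RR_le
    have hpi := Real.pi_gt_d2
    have hn1 : n = 0 ∨ n = 1 ∨ n = -1 := by
      rcases lt_trichotomy n 0 with h | h | h
      · right; right
        by_contra hne
        have : n ≤ -2 := by omega
        have : (n:ℝ) ≤ -2 := by exact_mod_cast this
        rw [← hn] at hyb
        rw [abs_mul, abs_of_pos Real.pi_pos] at hyb
        have : (2:ℝ) ≤ |(n:ℝ)| := by rw [_root_.abs_of_nonpos] <;> nlinarith
        nlinarith
      · left; exact_mod_cast h
      · right; left
        by_contra hne
        have : 2 ≤ n := by omega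
        have : (2:ℝ) ≤ (n:ℝ) := by exact_mod_cast this
        rw [← hn] at hyb
        rw [abs_mul, abs_of_pos Real.pi_pos] at hyb
        have : (2:ℝ) ≤ |(n:ℝ)| := by rw [_root_.abs_of_nonneg] <;> nlinarith
        nlinarith
    have hure1 : u.re < 1 := by
      rcases hn1 with h0 | h1 | hm1
      · -- im ζ = 0, so re ζ > 0, u.re = exp (-re ζ) < 1
        have hy : ζ.im = 0 := by rw [← hn, h0]; simp
        have hx := K_re_pos_of_im_zero hζ hy
        have : u.re = Real.exp (-ζ.re) * Real.cos (-ζ.im) := by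
          rw [hu, Complex.exp_re, Complex.neg_re, Complex.neg_im]
        rw [hy] at this; simp at this
        rw [this]
        exact Real.exp_lt_one_iff.mpr (by linarith)
      · have hy : ζ.im = Real.pi := by rw [← hn, h1]; simp
        have : u.re = Real.exp (-ζ.re) * Real.cos (-ζ.im) := by
          rw [hu, Complex.exp_re, Complex.neg_re, Complex.neg_im]
        rw [hy, Real.cos_neg, Real.cos_pi] at this
        have := Real.exp_pos (-ζ.re)
        nlinarith
      · have hy : ζ.im = -Real.pi := by rw [← hn, hm1]; simp
        have : u.re = Real.exp (-ζ.re) * Real.cos (-ζ.im) := by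
          rw [hu, Complex.exp_re, Complex.neg_re, Complex.neg_im]
        rw [hy] at this; simp [Real.cos_pi] at this
        have := Real.exp_pos (-ζ.re)
        nlinarith
    rw [del_re_eq, ← hu, him]
    nlinarith
  · right
    rw [del_im_eq, ← hu]
    exact mul_ne_zero him (by linarith)

lemma K_one_sub_exp_ne {ζ : ℂ} (hζ : ζ ∈ K) : (1 : ℂ) - Complex.exp (-ζ) ≠ 0 := by
  intro h0
  have h1 : Complex.exp (-ζ) = 1 := by
    have := sub_eq_zero.mp h0; exact this.symm
  obtain ⟨n, hn⟩ := Complex.exp_eq_one_iff.mp h1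
  have hζ' : ζ = -(n * (2 * Real.pi * Complex.I)) := by
    have : -ζ = n * (2 * Real.pi * Complex.I) := hn
    linear_combination -this
  have habs : ‖ζ‖ = |(n:ℝ)| * (2 * Real.pi) := by
    rw [hζ', norm_neg]
    rw [show (n : ℂ) * (2 * Real.pi * Complex.I) = ((2 * Real.pi * n : ℝ) : ℂ) * Complex.I by
      push_cast; ring]
    rw [norm_mul, Complex.norm_I, Complex.norm_real, Real.norm_eq_abs, mul_one, abs_mul, abs_mul,
      _root_.abs_of_nonneg (by norm_num : (0:ℝ) ≤ 2), _root_.abs_of_pos Real.pi_pos]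
    ring
  have h2 := hζ.2.1
  have h5 := hζ.1
  have hpi := Real.pi_gt_d2
  have hRR := RR_le
  rcases eq_or_ne n 0 with h | h
  · rw [h] at habs; simp at habs
    rw [habs] at h5; norm_num at h5
  · have : (1:ℝ) ≤ |(n:ℝ)| := by
      have h1 : (1:ℤ) ≤ |n| := by
        rcases lt_trichotomy n 0 with hh | hh | hh
        · rw [_root_.abs_of_neg hh]; omega
        · exact absurd hh h
        · rw [_root_.abs_of_pos hh]; omega
      exact_mod_cast h1
    rw [habs] at h2
    nlinarith


lemma del_continuous : Continuous del := by
  unfold del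
  fun_prop

lemma exists_far_bound₁ (a : ℝ) :
    ∃ C, ∀ ζ ∈ K, ‖ζ ^ (a : ℂ) - (del ζ) ^ (a : ℂ)‖ ≤ C := by
  have hcont : ContinuousOn (fun ζ : ℂ => ζ ^ (a : ℂ) - (del ζ) ^ (a : ℂ)) K := by
    intro ζ hζ
    apply ContinuousAt.continuousWithinAt
    apply ContinuousAt.sub
    · exact continuousAt_cpow_const (K_slit hζ)
    · exact (continuousAt_cpow_const (K_del_slit hζ)).comp del_continuous.continuousAt
  obtain ⟨C, hC⟩ := K_compact.exists_bound_of_continuousOn hcont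
  exact ⟨C, fun ζ h => by simpa using hC ζ h⟩

lemma exists_far_bound₂ (g : ℝ) :
    ∃ C, ∀ ζ ∈ K,
      ‖(del ζ) ^ (((2 - g : ℝ)) : ℂ) * rho1 (Complex.exp (-ζ)) - ζ ^ (-(g : ℂ))‖
        ≤ C := by
  have hcont : ContinuousOn
      (fun ζ : ℂ => (del ζ) ^ (((2 - g : ℝ)) : ℂ) * rho1 (Complex.exp (-ζ)) - ζ ^ (-(g : ℂ)))
      K := by
    intro ζ hζ
    apply ContinuousAt.continuousWithinAt
    apply ContinuousAt.sub
    · apply ContinuousAt.mul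
      · exact (continuousAt_cpow_const (K_del_slit hζ)).comp del_continuous.continuousAt
      · unfold rho1
        have hexp : ContinuousAt (fun ζ : ℂ => Complex.exp (-ζ)) ζ := by fun_prop
        apply ContinuousAt.div
        · exact hexp
        · exact (ContinuousAt.pow (by fun_prop) 2)
        · exact pow_ne_zero 2 (K_one_sub_exp_ne hζ)
    · exact continuousAt_cpow_const (K_slit hζ)
  obtain ⟨C, hC⟩ := K_compact.exists_bound_of_continuousOn hcont
  exact ⟨C, fun ζ h => by simpa using hC ζ h⟩



lemma mem_K {ζ : ℂ} (h5 : 1 / 5 ≤ ‖ζ‖) (hR : ‖ζ‖ ≤ RR)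
    (harg : |ζ.arg| ≤ th0) : ζ ∈ K := by
  refine ⟨h5, hR, ?_⟩
  have hζ0 : ζ ≠ 0 := by
    intro h0; rw [h0, norm_zero] at h5; norm_num at h5
  have e := Complex.norm_mul_cos_arg ζ
  have hcos : Real.cos th0 ≤ Real.cos ζ.arg := by
    have h := Real.cos_le_cos_of_nonneg_of_le_pi (abs_nonneg ζ.arg) th0_lt_pi.le harg
    rwa [Real.cos_abs] at h
  nlinarith [norm_nonneg ζ]

lemma scalar_main (a g : ℝ) (ha1 : 1 < a) (ha2 : a < 2) (hg1 : 0 < g) (hg2 : g < 1) :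
    ∃ C > (0:ℝ), ∀ ζ : ℂ, ζ ≠ 0 → ‖ζ‖ ≤ RR → |ζ.arg| ≤ th0 →
      del ζ ≠ 0 ∧
      ‖ζ ^ (a : ℂ) - (del ζ) ^ (a : ℂ)‖ ≤ C * ‖ζ‖ ^ (a + 2) ∧
      ‖(del ζ) ^ (((2 - g : ℝ)) : ℂ) * rho1 (Complex.exp (-ζ)) - ζ ^ (-(g : ℂ))‖
        ≤ C * ‖ζ‖ ^ (2 - g) := by
  obtain ⟨C₁, hC₁⟩ := exists_far_bound₁ a
  obtain ⟨C₂, hC₂⟩ := exists_far_bound₂ g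
  refine ⟨max 100 (625 * (|C₁| + |C₂| + 1)), by positivity, ?_⟩
  set C := max 100 (625 * (|C₁| + |C₂| + 1)) with hCdef
  have hC100 : (100:ℝ) ≤ C := le_max_left _ _
  have hC625 : 625 * (|C₁| + |C₂| + 1) ≤ C := le_max_right _ _
  have hCpos : (0:ℝ) < C := by positivity
  intro ζ hζ0 hR harg
  have habs : 0 < ‖ζ‖ := norm_pos_iff.mpr hζ0
  rcases le_or_gt (‖ζ‖) (1/5) with hnear | hfar
  · -- near the origin
    have harg' : |ζ.arg| ≤ Real.pi / 2 + 1 / 10 := by rwa [th0] at harg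
    refine ⟨del_ne_zero hζ0 hnear, ?_, ?_⟩
    · calc ‖ζ ^ (a : ℂ) - (del ζ) ^ (a : ℂ)‖
          ≤ 36 * ‖ζ‖ ^ (a + 2) :=
            near_N1 (by rw [_root_.abs_of_nonneg] <;> linarith) hζ0 hnear harg'
        _ ≤ C * ‖ζ‖ ^ (a + 2) := by
            have := Real.rpow_nonneg (norm_nonneg ζ) (a + 2)
            nlinarith
    · calc ‖(del ζ) ^ (((2 - g : ℝ)) : ℂ) * rho1 (Complex.exp (-ζ))
            - ζ ^ (-(g : ℂ))‖
          ≤ 100 * ‖ζ‖ ^ (2 - g) := near_N2 hg1 hg2 hζ0 hnear harg'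
        _ ≤ C * ‖ζ‖ ^ (2 - g) := by
            have := Real.rpow_nonneg (norm_nonneg ζ) (2 - g)
            nlinarith
  · -- compact region
    have hK : ζ ∈ K := mem_K hfar.le hR harg
    have hlow : ∀ e : ℝ, 0 ≤ e → e ≤ 4 → (1:ℝ) / 625 ≤ ‖ζ‖ ^ e := by
      intro e he0 he4
      calc (1:ℝ) / 625 = (1/5 : ℝ) ^ (4:ℝ) := by
            rw [show ((4:ℝ)) = ((4:ℕ):ℝ) by norm_num, Real.rpow_natCast]; norm_num
        _ ≤ (1/5 : ℝ) ^ e :=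
            Real.rpow_le_rpow_of_exponent_ge (by norm_num) (by norm_num) he4
        _ ≤ ‖ζ‖ ^ e := Real.rpow_le_rpow (by norm_num) hfar.le he0
    refine ⟨Complex.slitPlane_ne_zero (K_del_slit hK), ?_, ?_⟩
    · calc ‖ζ ^ (a : ℂ) - (del ζ) ^ (a : ℂ)‖ ≤ C₁ := hC₁ ζ hK
        _ ≤ C * (1/625) := by
            rw [mul_one_div, le_div_iff₀ (by norm_num)]
            calc C₁ * 625 ≤ |C₁| * 625 := by nlinarith [le_abs_self C₁, abs_nonneg C₂]
              _ ≤ C := by nlinarith [abs_nonneg C₁, abs_nonneg C₂]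
        _ ≤ C * ‖ζ‖ ^ (a + 2) := by
            have := hlow (a + 2) (by linarith) (by linarith)
            nlinarith
    · calc ‖(del ζ) ^ (((2 - g : ℝ)) : ℂ) * rho1 (Complex.exp (-ζ))
            - ζ ^ (-(g : ℂ))‖ ≤ C₂ := hC₂ ζ hK
        _ ≤ C * (1/625) := by
            rw [mul_one_div, le_div_iff₀ (by norm_num)]
            calc C₂ * 625 ≤ |C₂| * 625 := by nlinarith [le_abs_self C₂, abs_nonneg C₁]
              _ ≤ C := by nlinarith [abs_nonneg C₁, abs_nonneg C₂]
        _ ≤ C * ‖ζ‖ ^ (2 - g) := by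
            have := hlow (2 - g) (by linarith) (by linarith)
            nlinarith

theorem bdf2_noise_term_operator_estimate
    {H : Type*} [NormedAddCommGroup H] [InnerProductSpace ℂ H] [CompleteSpace H]
    (α γ : ℝ) (hα : α ∈ Ioo (1 : ℝ) 2) (hγ : γ ∈ Ioo (0 : ℝ) 1) (M : ℝ) (hM : 0 < M) :
    ∃ θ₀ ∈ Ioo (Real.pi / 2) Real.pi, ∀ θ ∈ Ioo (Real.pi / 2) θ₀,
      ∃ c > (0 : ℝ),
        ∀ τ : ℝ, 0 < τ → ∀ z ∈ Dset τ θ,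
          ∀ R₁ R₂ : H →L[ℂ] H,
            ‖R₁‖ ≤ M * ‖z‖ ^ (-α) →
            ‖R₂‖ ≤ M * ‖z‖ ^ (-α) →
            R₂ - R₁ = (z ^ (α : ℂ) - (bdf2 τ (Complex.exp (-z * τ))) ^ (α : ℂ)) •
              (R₂ ∘L R₁) →
            ‖((bdf2 τ (Complex.exp (-z * τ))) ^ (((2 - γ : ℝ)) : ℂ) *
                  rho1 (Complex.exp (-z * τ)) * (τ : ℂ) ^ 2) • R₂ -
                (z ^ (-(γ : ℂ))) • R₁‖ ≤
              c * τ ^ 2 * ‖z‖ ^ (2 - α - γ) := by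
  obtain ⟨C, hCpos, hC⟩ := scalar_main α γ hα.1 hα.2 hγ.1 hγ.2
  refine ⟨th0, ⟨th0_gt, th0_lt_pi⟩, ?_⟩
  intro θ hθ
  refine ⟨C * (M + M * M), by nlinarith, ?_⟩
  intro τ hτ z hz R₁ R₂ hR₁ hR₂ hres
  obtain ⟨hz0, hcase⟩ := hz
  set ζ := z * (τ : ℂ) with hζdef
  have hτC : (τ : ℂ) ≠ 0 := by exact_mod_cast hτ.ne'
  have hζ0 : ζ ≠ 0 := mul_ne_zero hz0 hτC
  set aa := ‖ζ‖ with haa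
  have habsζ : aa = ‖z‖ * τ := by
    rw [haa, hζdef, norm_mul, Complex.norm_real, Real.norm_eq_abs, _root_.abs_of_pos hτ]
  have habsζpos : 0 < aa := norm_pos_iff.mpr hζ0
  have habspos : 0 < ‖z‖ := norm_pos_iff.mpr hz0
  have hargζ : ζ.arg = z.arg := by
    rw [hζdef, mul_comm]; exact Complex.arg_real_mul z hτ
  -- region membership
  have hargθ : |ζ.arg| ≤ th0 := by
    rw [hargζ]
    rcases hcase with ⟨h1, _⟩ | ⟨_, h2⟩
    · rw [h1]; exact le_of_lt hθ.2
    · exact le_trans h2 (le_of_lt hθ.2)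
  have himζ : ζ.im = z.im * τ := by
    rw [hζdef]; simp [Complex.mul_im]
  have habsR : aa ≤ RR := by
    rcases hcase with ⟨h1, h2⟩ | ⟨h1, _⟩
    · -- |arg z| = θ
      have hθpos : 0 < θ := lt_trans (by positivity) hθ.1
      have hsinθ : Real.sin th0 ≤ Real.sin θ := by
        have e : ∀ t : ℝ, Real.cos (t - Real.pi / 2) = Real.sin t := by
          intro t
          rw [← Real.cos_neg, neg_sub, Real.cos_pi_div_two_sub]
        have hmono := Real.cos_le_cos_of_nonneg_of_le_pi
          (by linarith [hθ.1] : (0:ℝ) ≤ θ - Real.pi / 2)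
          (by have := th0_lt_pi; have := Real.pi_pos; rw [th0] at *; linarith :
            th0 - Real.pi / 2 ≤ Real.pi)
          (by linarith [hθ.2] : θ - Real.pi / 2 ≤ th0 - Real.pi / 2)
        rw [e, e] at hmono
        exact hmono
      have hsinθpos : 0 < Real.sin θ := lt_of_lt_of_le sin_th0_pos hsinθ
      -- |im ζ| = aa * sin θ
      have hargabs : |ζ.arg| = θ := by rw [hargζ]; exact h1
      have him_eq : |ζ.im| = aa * Real.sin θ := by
        have e := Complex.norm_mul_sin_arg ζ
        rcases abs_eq hθpos.le |>.mp hargabs with he | he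
        · rw [← e, he, _root_.abs_of_nonneg]
          positivity
        · rw [← e, he, Real.sin_neg]
          rw [abs_mul, _root_.abs_of_nonneg (norm_nonneg ζ), abs_neg,
            _root_.abs_of_nonneg hsinθpos.le]
      have him_le : |ζ.im| ≤ Real.pi := by
        rw [himζ, abs_mul, _root_.abs_of_pos hτ]
        calc |z.im| * τ ≤ Real.pi / τ * τ := by nlinarith
          _ = Real.pi := by field_simp
      rw [RR, le_div_iff₀ sin_th0_pos]
      nlinarith
    · calc aa = ‖z‖ * τ := habsζ
        _ ≤ 1 / τ * τ := by nlinarith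
        _ = 1 := by field_simp
        _ ≤ RR := RR_ge_one
  obtain ⟨hdel0, hA, hB⟩ := hC ζ hζ0 habsR hargθ
  -- identifications
  have hu : Complex.exp (-z * (τ : ℂ)) = Complex.exp (-ζ) := by
    rw [hζdef, neg_mul]
  have hwdef : bdf2 τ (Complex.exp (-z * (τ : ℂ))) = ((τ⁻¹ : ℝ) : ℂ) * del ζ := by
    rw [bdf2, hu, del, Complex.ofReal_inv]
  have hzeq : z = ((τ⁻¹ : ℝ) : ℂ) * ζ := by
    rw [hζdef, Complex.ofReal_inv]
    field_simp
  have hsplitw : ∀ s : ℂ, (((τ⁻¹ : ℝ) : ℂ) * del ζ) ^ s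
      = ((τ⁻¹ : ℝ) : ℂ) ^ s * (del ζ) ^ s :=
    fun s => real_mul_cpow (inv_pos.mpr hτ) hdel0 s
  have hsplitz : ∀ s : ℂ, z ^ s = ((τ⁻¹ : ℝ) : ℂ) ^ s * ζ ^ s := by
    intro s
    rw [hzeq]
    exact real_mul_cpow (inv_pos.mpr hτ) hζ0 s
  have htpow : ∀ s : ℝ, ((τ⁻¹ : ℝ) : ℂ) ^ ((s : ℝ) : ℂ) = ((τ ^ (-s) : ℝ) : ℂ) := by
    intro s
    rw [← Complex.ofReal_cpow (inv_nonneg.mpr hτ.le) s]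
    congr 1
    rw [Real.inv_rpow hτ.le, ← Real.rpow_neg hτ.le]
  have hneg : -(γ : ℂ) = ((-γ : ℝ) : ℂ) := by push_cast; ring
  -- scalar identity for the resolvent difference
  have hD : z ^ (α : ℂ) - (bdf2 τ (Complex.exp (-z * τ))) ^ (α : ℂ)
      = ((τ ^ (-α) : ℝ) : ℂ) * (ζ ^ (α : ℂ) - (del ζ) ^ (α : ℂ)) := by
    rw [hwdef, hsplitw, hsplitz, htpow α]; ring
  -- scalar identity for S
  have hτ2 : ((τ : ℂ)) ^ 2 = ((τ ^ 2 : ℝ) : ℂ) := by push_cast; ring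
  have hrp : (τ : ℝ) ^ (-(2 - γ)) * τ ^ 2 = τ ^ (γ : ℝ) := by
    rw [show (τ:ℝ) ^ 2 = τ ^ ((2:ℕ):ℝ) by rw [Real.rpow_natCast],
      ← Real.rpow_add hτ]
    norm_num
  have hS : (bdf2 τ (Complex.exp (-z * τ))) ^ (((2 - γ : ℝ)) : ℂ) *
        rho1 (Complex.exp (-z * τ)) * (τ : ℂ) ^ 2
      = ((τ ^ (γ:ℝ) : ℝ) : ℂ) * ((del ζ) ^ (((2 - γ : ℝ)) : ℂ) * rho1 (Complex.exp (-ζ))) := by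
    rw [hwdef, hu, hsplitw, htpow (2 - γ), hτ2, ← hrp]
    push_cast
    ring
  have hY : z ^ (-(γ : ℂ)) = ((τ ^ (γ:ℝ) : ℝ) : ℂ) * ζ ^ (-(γ : ℂ)) := by
    rw [hneg, hsplitz, htpow (-γ), neg_neg]
  -- operator norm estimate
  set B := (del ζ) ^ (((2 - γ : ℝ)) : ℂ) * rho1 (Complex.exp (-ζ)) with hBdef
  set Y := ζ ^ (-(γ : ℂ)) with hYdef
  have hTid : ((bdf2 τ (Complex.exp (-z * τ))) ^ (((2 - γ : ℝ)) : ℂ) *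
        rho1 (Complex.exp (-z * τ)) * (τ : ℂ) ^ 2) • R₂ - (z ^ (-(γ : ℂ))) • R₁
      = ((τ ^ (γ:ℝ) : ℝ) : ℂ) • (B • R₂ - Y • R₁) := by
    rw [hS, hY, smul_sub, ← mul_smul, ← mul_smul]
  have hinner_id : B • R₂ - Y • R₁ = (B - Y) • R₂ + Y • (R₂ - R₁) := by
    rw [sub_smul, smul_sub]; abel
  -- norms
  have habsY : ‖Y‖ = aa ^ (-γ) := by
    rw [hYdef, hneg, Complex.norm_cpow_real]
  have hRdiff : ‖R₂ - R₁‖ ≤ τ ^ (-α) * (C * aa ^ (α + 2)) * (‖R₂‖ * ‖R₁‖) := by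
    rw [hres, hD]
    rw [norm_smul]
    have h1 : ‖((τ ^ (-α) : ℝ) : ℂ) * (ζ ^ (α : ℂ) - (del ζ) ^ (α : ℂ))‖
        ≤ τ ^ (-α) * (C * aa ^ (α + 2)) := by
      rw [norm_mul, Complex.norm_real, Real.norm_eq_abs,
        _root_.abs_of_nonneg (Real.rpow_nonneg hτ.le _)]
      have := Real.rpow_nonneg hτ.le (-α)
      nlinarith
    have h2 : ‖R₂ ∘L R₁‖ ≤ ‖R₂‖ * ‖R₁‖ := ContinuousLinearMap.opNorm_comp_le R₂ R₁
    have hn1 : (0:ℝ) ≤ ‖((τ ^ (-α) : ℝ) : ℂ) * (ζ ^ (α : ℂ) - (del ζ) ^ (α : ℂ))‖ :=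
      norm_nonneg _
    nlinarith [norm_nonneg (R₂ ∘L R₁)]
  -- abbreviate real quantities
  have hZα : ‖z‖ ^ (-α) = aa ^ (-α) * τ ^ α := by
    have habsz : ‖z‖ = aa * τ⁻¹ := by
      rw [habsζ]; field_simp
    rw [habsz, Real.mul_rpow habsζpos.le (by positivity), Real.inv_rpow hτ.le,
      ← Real.rpow_neg hτ.le, neg_neg]
  have hR2' : ‖R₂‖ ≤ M * (aa ^ (-α) * τ ^ α) := by rw [← hZα]; exact hR₂
  have hR1' : ‖R₁‖ ≤ M * (aa ^ (-α) * τ ^ α) := by rw [← hZα]; exact hR₁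
  -- the inner estimate
  have hinner : ‖B • R₂ - Y • R₁‖ ≤ C * (M + M * M) * (aa ^ (2 - α - γ) * τ ^ α) := by
    rw [hinner_id]
    have step1 : ‖(B - Y) • R₂‖ ≤ C * aa ^ (2 - γ) * (M * (aa ^ (-α) * τ ^ α)) := by
      rw [norm_smul]
      exact mul_le_mul hB hR2' (norm_nonneg R₂)
        (mul_nonneg hCpos.le (Real.rpow_nonneg habsζpos.le (2 - γ)))
    have step2 : ‖Y • (R₂ - R₁)‖ ≤
        aa ^ (-γ) * (τ ^ (-α) * (C * aa ^ (α + 2)) *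
          ((M * (aa ^ (-α) * τ ^ α)) * (M * (aa ^ (-α) * τ ^ α)))) := by
      rw [norm_smul, habsY]
      have hQ : (0:ℝ) ≤ M * (aa ^ (-α) * τ ^ α) :=
        mul_nonneg hM.le (mul_nonneg (Real.rpow_nonneg habsζpos.le (-α))
          (Real.rpow_nonneg hτ.le α))
      have h2 : ‖R₂‖ * ‖R₁‖ ≤ (M * (aa ^ (-α) * τ ^ α)) * (M * (aa ^ (-α) * τ ^ α)) :=
        mul_le_mul hR2' hR1' (norm_nonneg R₁) hQ
      have hpos1 : (0:ℝ) ≤ τ ^ (-α) * (C * aa ^ (α + 2)) := by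
        apply mul_nonneg (Real.rpow_nonneg hτ.le _)
        exact mul_nonneg hCpos.le (Real.rpow_nonneg habsζpos.le _)
      have hpos2 : (0:ℝ) ≤ aa ^ (-γ) := Real.rpow_nonneg habsζpos.le _
      apply mul_le_mul_of_nonneg_left _ hpos2
      exact le_trans hRdiff (mul_le_mul_of_nonneg_left h2 hpos1)
    have e1 : aa ^ (2 - γ) * aa ^ (-α) = aa ^ (2 - α - γ) := by
      rw [← Real.rpow_add habsζpos]; congr 1; ring
    have e2 : aa ^ (-γ) * (aa ^ (α + 2) * (aa ^ (-α) * aa ^ (-α))) = aa ^ (2 - α - γ) := by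
      rw [← Real.rpow_add habsζpos, ← Real.rpow_add habsζpos, ← Real.rpow_add habsζpos]
      congr 1; ring
    have e3 : τ ^ (-α) * (τ ^ α * τ ^ α) = τ ^ α := by
      rw [← Real.rpow_add hτ, ← Real.rpow_add hτ]; congr 1; ring
    calc ‖(B - Y) • R₂ + Y • (R₂ - R₁)‖
        ≤ ‖(B - Y) • R₂‖ + ‖Y • (R₂ - R₁)‖ := norm_add_le _ _
      _ ≤ C * aa ^ (2 - γ) * (M * (aa ^ (-α) * τ ^ α)) +
          aa ^ (-γ) * (τ ^ (-α) * (C * aa ^ (α + 2)) *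
            ((M * (aa ^ (-α) * τ ^ α)) * (M * (aa ^ (-α) * τ ^ α)))) := by linarith
      _ = C * M * ((aa ^ (2 - γ) * aa ^ (-α)) * τ ^ α) +
          C * (M * M) * ((aa ^ (-γ) * (aa ^ (α + 2) * (aa ^ (-α) * aa ^ (-α)))) *
            (τ ^ (-α) * (τ ^ α * τ ^ α))) := by ring
      _ = C * M * (aa ^ (2 - α - γ) * τ ^ α) +
          C * (M * M) * (aa ^ (2 - α - γ) * τ ^ α) := by rw [e1, e2, e3]
      _ = C * (M + M * M) * (aa ^ (2 - α - γ) * τ ^ α) := by ring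
  -- final
  rw [hTid, norm_smul, Complex.norm_real, Real.norm_eq_abs,
    _root_.abs_of_nonneg (Real.rpow_nonneg hτ.le _)]
  have hfin : τ ^ (γ:ℝ) * (C * (M + M * M) * (aa ^ (2 - α - γ) * τ ^ α))
      = C * (M + M * M) * τ ^ 2 * ‖z‖ ^ (2 - α - γ) := by
    have habsz : ‖z‖ = aa * τ⁻¹ := by
      rw [habsζ]; field_simp
    rw [habsz, Real.mul_rpow habsζpos.le (by positivity), Real.inv_rpow hτ.le,
      ← Real.rpow_neg hτ.le]
    have e7 : (τ:ℝ) ^ 2 * τ ^ (-(2 - α - γ)) = τ ^ (γ:ℝ) * τ ^ α := by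
      rw [show (τ:ℝ) ^ 2 = τ ^ ((2:ℕ):ℝ) by rw [Real.rpow_natCast],
        ← Real.rpow_add hτ, ← Real.rpow_add hτ]
      congr 1; ring
    calc τ ^ (γ:ℝ) * (C * (M + M * M) * (aa ^ (2 - α - γ) * τ ^ α))
        = C * (M + M * M) * aa ^ (2 - α - γ) * (τ ^ (γ:ℝ) * τ ^ α) := by ring
      _ = C * (M + M * M) * aa ^ (2 - α - γ) * (τ ^ 2 * τ ^ (-(2 - α - γ))) := by rw [e7]
      _ = C * (M + M * M) * τ ^ 2 * (aa ^ (2 - α - γ) * τ ^ (-(2 - α - γ))) := by ring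
  calc τ ^ (γ:ℝ) * ‖B • R₂ - Y • R₁‖
      ≤ τ ^ (γ:ℝ) * (C * (M + M * M) * (aa ^ (2 - α - γ) * τ ^ α)) :=
        mul_le_mul_of_nonneg_left hinner (Real.rpow_nonneg hτ.le (γ:ℝ))
    _ = C * (M + M * M) * τ ^ 2 * ‖z‖ ^ (2 - α - γ) := hfin
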